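/- Let R be a real symmetric positive-definite n×n matrix whose traceless part R̄ = R - (tr(R)/n)·I is nonzero. Define g(β) = tr(exp(β R̄)·exp(β R̄)ᵀ·R). Then the derivative of g at β = 0 equals 2·tr(R̄²), which is strictly positive; hence for sufficiently small negative β, g(β) < g(0). -/

import Mathlib

open Matrix

theorem deriv_perturbed_nsm {n : ℕ}
    (R : Matrix (Fin n) (Fin n) ℝ) (hR : R.PosDef)
    (Rbar : Matrix (Fin n) (Fin n) ℝ)
    (hRbar : Rbar = R - (R.trace / (n : ℝ)) • (1 : Matrix (Fin n) (Fin n) ℝ))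
    (hne : Rbar ≠ 0)
    (g : ℝ → ℝ)
    (hg : g = fun β : ℝ =>
      (NormedSpace.exp (β • Rbar) * (NormedSpace.exp (β • Rbar))ᵀ * R).trace) :
    HasDerivAt g (2 * (Rbar * Rbar).trace) 0 ∧
    0 < (Rbar * Rbar).trace ∧
    ∃ δ > 0, ∀ β : ℝ, -δ < β → β < 0 → g β < g 0 := by
  have hn : 0 < n := by
    rcases Nat.eq_zero_or_pos n with h | h
    · exfalso; apply hne; subst h; exact Subsingleton.elim _ _
    · exact h
  -- symmetry of R and Rbar
  have hRsym : Rᵀ = R := by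
    have := hR.isHermitian
    rw [← Matrix.conjTranspose_eq_transpose_of_trivial]; exact this
  have hsym : Rbarᵀ = Rbar := by
    rw [hRbar, Matrix.transpose_sub, Matrix.transpose_smul, Matrix.transpose_one, hRsym]
  -- trace of Rbar is zero
  have htr : Rbar.trace = 0 := by
    rw [hRbar, Matrix.trace_sub, Matrix.trace_smul, Matrix.trace_one]
    rw [Fintype.card_fin, smul_eq_mul, div_mul_cancel₀ _ (Nat.cast_ne_zero.mpr hn.ne'), sub_self]
  -- rewrite g without transpose
  have hg' : g = fun β : ℝ =>
      (NormedSpace.exp (β • Rbar) * NormedSpace.exp (β • Rbar) * R).trace := by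
    rw [hg]
    funext β
    rw [← Matrix.exp_transpose, Matrix.transpose_smul, hsym]
  -- derivative computation
  have hderiv : HasDerivAt g (2 * (Rbar * Rbar).trace) 0 := by
    letI : SeminormedRing (Matrix (Fin n) (Fin n) ℝ) := Matrix.linftyOpSemiNormedRing
    letI : NormedRing (Matrix (Fin n) (Fin n) ℝ) := Matrix.linftyOpNormedRing
    letI : NormedAlgebra ℝ (Matrix (Fin n) (Fin n) ℝ) := Matrix.linftyOpNormedAlgebra
    have h1 : HasDerivAt (fun β : ℝ => NormedSpace.exp (β • Rbar)) Rbar 0 := by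
      have h := hasDerivAt_exp_smul_const (𝕂 := ℝ) Rbar 0; simp at h; exact h
    have h3 : HasDerivAt
        (fun β : ℝ => NormedSpace.exp (β • Rbar) * NormedSpace.exp (β • Rbar) * R)
        ((Rbar + Rbar) * R) 0 := by
      have := (h1.mul h1).mul_const R
      simp [NormedSpace.exp_zero, add_mul] at this; rw [add_mul]; exact this
    have hT : HasDerivAt
        (fun β : ℝ =>
          (NormedSpace.exp (β • Rbar) * NormedSpace.exp (β • Rbar) * R).trace)
        (((Rbar + Rbar) * R).trace) 0 := by
      have hc := (Matrix.traceLinearMap (Fin n) ℝ ℝ).toContinuousLinearMap.hasFDerivAt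
        (x := (NormedSpace.exp ((0:ℝ) • Rbar) * NormedSpace.exp ((0:ℝ) • Rbar) * R))
      exact (hc.comp_hasDerivAt 0 h3)
    have key : ((Rbar + Rbar) * R).trace = 2 * (Rbar * Rbar).trace := by
      have : Rbar * R = Rbar * Rbar + (R.trace / (n : ℝ)) • Rbar := by
        rw [hRbar]
        simp [Matrix.mul_sub, Matrix.mul_smul, hRbar]
      rw [add_mul, Matrix.trace_add, this, Matrix.trace_add, Matrix.trace_smul, htr]
      simp
      ring
    rw [hg']
    exact key ▸ hT
  -- positivity
  have hpos : 0 < (Rbar * Rbar).trace := by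
    have hval : (Rbar * Rbar).trace = ∑ i, ∑ j, (Rbar i j) ^ 2 := by
      rw [Matrix.trace, Finset.sum_congr rfl]
      intro i _
      rw [Matrix.diag_apply, Matrix.mul_apply]
      refine Finset.sum_congr rfl fun j _ => ?_
      have h5 : Rbar j i = Rbar i j := congrFun (congrFun hsym i) j
      rw [h5]; ring
    rw [hval]
    obtain ⟨i, j, hij⟩ : ∃ i j, Rbar i j ≠ 0 := by
      by_contra h
      push_neg at h
      exact hne (by ext i j; exact h i j)
    refine Finset.sum_pos' (fun i _ => Finset.sum_nonneg fun j _ => sq_nonneg _) ?_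
    refine ⟨i, Finset.mem_univ i, ?_⟩
    refine Finset.sum_pos' (fun j _ => sq_nonneg _) ⟨j, Finset.mem_univ j, ?_⟩
    positivity
  refine ⟨hderiv, hpos, ?_⟩
  -- small negative β
  have hslope : Filter.Tendsto (slope g 0) (nhdsWithin 0 {(0:ℝ)}ᶜ)
      (nhds (2 * (Rbar * Rbar).trace)) := hasDerivAt_iff_tendsto_slope.mp hderiv
  have hev : ∀ᶠ β in nhdsWithin 0 {(0:ℝ)}ᶜ, 0 < slope g 0 β :=
    hslope.eventually (eventually_gt_nhds (by positivity))
  obtain ⟨δ, hδ, h⟩ := Metric.mem_nhdsWithin_iff.mp hev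
  refine ⟨δ, hδ, fun β h1 h2 => ?_⟩
  have hβ : 0 < slope g 0 β := by
    refine h ⟨?_, ?_⟩
    · simp only [Metric.mem_ball, Real.dist_eq, sub_zero, abs_of_neg h2]; linarith
    · simp [h2.ne]
  rw [slope_def_field] at hβ
  rcases div_pos_iff.mp hβ with ⟨_, hb⟩ | ⟨hnum, _⟩
  · linarith
  · linarith
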